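/- For continuous-time I-synergy with k ≥ 2 and β ≥ ln(k/(k-1)), the saddle-node condition R(p*) = R'(p*) = 0 with p* ∈ (0,1) for R(p) = -μ p + (1-p) α k p (1-p+p e^β)^{k-1} is satisfied with α/μ = (k/(k-1))^{k-1} (e^β - 1) e^{-βk} and p* = 1 - 1/(k(1 - e^{-β})). -/

import Mathlib

theorem stmt8 (k : ℕ) (hk : 2 ≤ k) (μ α β : ℝ) (hμ : 0 < μ) (hα : 0 < α)
    (hβ : Real.log ((k : ℝ) / ((k : ℝ) - 1)) ≤ β)
    (hαSN : α / μ = ((k : ℝ) / ((k : ℝ) - 1)) ^ (k - 1) * (Real.exp β - 1) * Real.exp (-β * k))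
    (R : ℝ → ℝ)
    (hR : ∀ p, R p = -μ * p + (1 - p) * α * k * p * (1 - p + p * Real.exp β) ^ (k - 1))
    (ps : ℝ) (hps : ps = 1 - 1 / (k * (1 - Real.exp (-β)))) :
    R ps = 0 ∧ deriv R ps = 0 := by
  obtain ⟨m, rfl⟩ : ∃ m, k = m + 2 := ⟨k - 2, by omega⟩
  set c : ℝ := ((m + 2 : ℕ) : ℝ) with hc
  set E : ℝ := Real.exp β with hE
  have hcval : c = (m : ℝ) + 2 := by push_cast [hc]; ring
  have hm0 : (0 : ℝ) ≤ (m : ℝ) := Nat.cast_nonneg m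
  have hc1 : (1 : ℝ) ≤ c - 1 := by rw [hcval]; linarith
  have hcpos : (0 : ℝ) < c := by linarith
  have hc1pos : (0 : ℝ) < c - 1 := by linarith
  have hEk : c / (c - 1) ≤ E := by
    have h0 : (0 : ℝ) < c / (c - 1) := by positivity
    calc c / (c - 1) = Real.exp (Real.log (c / (c - 1))) := (Real.exp_log h0).symm
      _ ≤ E := Real.exp_le_exp.mpr hβ
  have hE1 : 1 < E := by
    refine lt_of_lt_of_le ?_ hEk
    rw [lt_div_iff₀ hc1pos]; linarith
  have hEpos : (0 : ℝ) < E := by linarith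
  have hE0 : E ≠ 0 := ne_of_gt hEpos
  have hE1' : E - 1 ≠ 0 := by intro h; nlinarith
  have hc0 : c ≠ 0 := ne_of_gt hcpos
  have hc10 : c - 1 ≠ 0 := ne_of_gt hc1pos
  have hexpneg : Real.exp (-β) = E⁻¹ := by rw [hE, Real.exp_neg]
  have hps' : ps = 1 - E / (c * (E - 1)) := by
    rw [hps, hexpneg]
    have : (1 : ℝ) - E⁻¹ = (E - 1) / E := by field_simp
    rw [this]
    field_simp
  have h1ps : 1 - ps = E / (c * (E - 1)) := by rw [hps']; ring
  have hAval : 1 - ps + ps * E = E * (c - 1) / c := by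
    rw [hps']; field_simp; ring
  have hexpk : Real.exp (-β * c) = (E ^ (m + 2))⁻¹ := by
    calc Real.exp (-β * c) = Real.exp (((m + 2 : ℕ) : ℝ) * (-β)) := by rw [mul_comm, hc]
      _ = Real.exp (-β) ^ (m + 2) := Real.exp_nat_mul _ _
      _ = (E⁻¹) ^ (m + 2) := by rw [hexpneg]
      _ = (E ^ (m + 2))⁻¹ := by rw [inv_pow]
  have hαval : α = μ * ((c / (c - 1)) ^ (m + 1) * (E - 1) * (E ^ (m + 2))⁻¹) := by
    have h := hαSN
    rw [hexpk] at h
    field_simp at h ⊢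
    rw [show m + 2 - 1 = m + 1 by omega] at h
    linarith [h]
  have hEpow : E ^ (m + 2) ≠ 0 := pow_ne_zero _ hE0
  -- key identity
  have hkey : (1 - ps) * α * c * (1 - ps + ps * E) ^ (m + 1) = μ := by
    rw [hAval, h1ps, hαval]
    rw [show (E * (c - 1) / c) ^ (m + 1) = E ^ (m+1) * (c-1) ^ (m+1) / c ^ (m+1) by
      rw [div_pow, mul_pow],
      show (c / (c - 1)) ^ (m + 1) = c ^ (m+1) / (c-1) ^ (m+1) from div_pow ..]
    have hcp : c ^ (m+1) ≠ 0 := pow_ne_zero _ hc0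
    have hc1p : (c-1) ^ (m+1) ≠ 0 := pow_ne_zero _ hc10
    field_simp
    ring
  constructor
  · rw [hR, show m + 2 - 1 = m + 1 by omega]
    linear_combination ps * hkey
  · have hRfun : R = fun p => -μ * p + (1 - p) * α * c * p * (1 - p + p * E) ^ (m + 1) :=
      funext hR
    have hA : HasDerivAt (fun p : ℝ => 1 - p + p * E) (E - 1) ps := by
      have h := ((hasDerivAt_id ps).const_sub 1).add ((hasDerivAt_id ps).mul_const E)
      exact h.congr_deriv (by ring)
    have hpow : HasDerivAt (fun p : ℝ => (1 - p + p * E) ^ (m + 1))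
        ((m + 1 : ℕ) * (1 - ps + ps * E) ^ m * (E - 1)) ps := by
      simpa using hA.fun_pow (m + 1)
    have hq1 : HasDerivAt (fun p : ℝ => (1 - p) * α * c * p)
        ((-1 * α * c) * ps + ((1 - ps) * α * c) * 1) ps :=
      ((((hasDerivAt_id ps).const_sub 1).mul_const α).mul_const c).mul (hasDerivAt_id ps)
    have hprod := hq1.mul hpow
    have hfull := ((hasDerivAt_id ps).const_mul (-μ)).add hprod
    have hder : deriv R ps = -μ * 1 +
        (((-1 * α * c) * ps + ((1 - ps) * α * c) * 1) * (1 - ps + ps * E) ^ (m + 1) +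
          ((1 - ps) * α * c * ps) * ((m + 1 : ℕ) * (1 - ps + ps * E) ^ m * (E - 1))) := by
      rw [hRfun]
      exact hfull.deriv
    rw [hder]
    -- B identity: the bracket equals (1-ps) * A; reduce to hkey
    have hBr : (1 - ps) * (E - 1) = E / c := by
      rw [h1ps]; field_simp
    -- goal: show the whole thing is 0
    have hApos : (0 : ℝ) < 1 - ps + ps * E := by rw [hAval]; positivity
    have hm1c : (m : ℝ) + 1 = c - 1 := by rw [hcval]; ring
    have hbr2 : (1 - ps) * ((m : ℝ) + 1) * (E - 1) = 1 - ps + ps * E := by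
      rw [hAval, h1ps, hm1c]
      field_simp
    push_cast
    linear_combination hkey + α * c * ps * (1 - ps + ps * E) ^ m * hbr2
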